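/- For the Lorenz system with r = 28, the nonzero fixed points C± = (±√72, ±√72, 27) satisfy: the Jacobian matrix at C± has one real negative eigenvalue and a pair of complex conjugate eigenvalues with positive real part (hence C± are unstable fixed points of saddle-focus type). -/
import Mathlib
open Polynomial Matrix

noncomputable def lorenzJac28 (x y z : ℝ) : Matrix (Fin 3) (Fin 3) ℝ :=
  !![-10, 10, 0; 28 - z, -1, -x; y, x, -8/3]

lemma lorenz_charpoly (s : ℝ) (hs : (s:ℂ)^2 = 72) :
    ((lorenzJac28 s s 27).map (Complex.ofReal)).charpoly
      = X^3 + C (41/3 : ℂ) * X^2 + C (304/3 : ℂ) * X + C 1440 := by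
  rw [Matrix.charpoly, Matrix.det_fin_three]
  simp [charmatrix_apply, lorenzJac28, Matrix.map_apply]
  apply Polynomial.funext
  intro x
  simp
  linear_combination (x + 20) * hs

lemma exists_mu : ∃ μ : ℝ, -14 < μ ∧ μ < -41/3 ∧
    μ^3 + 41/3*μ^2 + 304/3*μ + 1440 = 0 := by
  have hcont : Continuous fun t : ℝ => t^3 + 41/3*t^2 + 304/3*t + 1440 := by continuity
  have h := intermediate_value_Icc (a := (-14:ℝ)) (b := -41/3) (by norm_num)
    hcont.continuousOn
  have h0 : (0:ℝ) ∈ Set.Icc ((-14:ℝ)^3 + 41/3*(-14)^2 + 304/3*(-14) + 1440)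
      ((-41/3:ℝ)^3 + 41/3*(-41/3)^2 + 304/3*(-41/3) + 1440) := by
    constructor <;> norm_num
  obtain ⟨μ, hμIcc, hμ0⟩ := h h0
  refine ⟨μ, ?_, ?_, hμ0⟩
  · rcases lt_or_eq_of_le hμIcc.1 with h | h
    · exact h
    · exfalso; rw [← h] at hμ0; norm_num at hμ0
  · rcases lt_or_eq_of_le hμIcc.2 with h | h
    · exact h
    · exfalso; rw [h] at hμ0; norm_num at hμ0

/-- At the nonzero fixed points `C± = (±√72, ±√72, 27)` of the Lorenz system with
`r = 28`, the Jacobian has one real negative eigenvalue and a pair of complex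
conjugate eigenvalues with positive real part. -/
theorem lorenz_Cpm_saddle_focus :
    ∀ s : ℝ, (s = Real.sqrt 72 ∨ s = -Real.sqrt 72) →
    ∃ (μ : ℝ) (ζ : ℂ), μ < 0 ∧ 0 < ζ.re ∧ ζ.im ≠ 0 ∧
      ((lorenzJac28 s s 27).map (Complex.ofReal)).charpoly =
        (X - C (μ : ℂ)) * (X - C ζ) * (X - C (starRingEnd ℂ ζ)) := by
  intro s hs
  have hs2 : (s:ℂ)^2 = 72 := by
    have : s^2 = 72 := by
      rcases hs with h | h <;> rw [h] <;>
        simp [Real.sq_sqrt (by norm_num : (72:ℝ) ≥ 0), neg_pow]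
    exact_mod_cast congrArg (Complex.ofReal) this
  obtain ⟨μ, hμ1, hμ2, hμ0⟩ := exists_mu
  set a : ℝ := μ + 41/3 with ha
  set c : ℝ := μ^2 + 41/3*μ + 304/3 with hc
  have hdisc : 0 < c - a^2/4 := by nlinarith
  set t : ℝ := Real.sqrt (c - a^2/4) with htdef
  have ht : 0 < t := Real.sqrt_pos.mpr hdisc
  have ht2 : t^2 = c - a^2/4 := Real.sq_sqrt hdisc.le
  refine ⟨μ, (-(a/2) : ℝ) + (t:ℝ) * Complex.I, by linarith, ?_, ?_, ?_⟩
  · simp; linarith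
  · simp; linarith
  · rw [lorenz_charpoly s hs2]
    have hconj : (starRingEnd ℂ) ((-(a/2) : ℝ) + (t:ℝ) * Complex.I)
        = (-(a/2) : ℝ) - (t:ℝ) * Complex.I := by
      apply Complex.ext <;> simp [Complex.div_re, Complex.div_im, map_ofNat]
    rw [hconj]
    apply Polynomial.funext
    intro x
    have hμ0' : (μ:ℂ)^3 + 41/3*(μ:ℂ)^2 + 304/3*(μ:ℂ) + 1440 = 0 := by
      have h := congrArg (fun r : ℝ => (r:ℂ)) hμ0
      push_cast at h
      linear_combination h
    have ht2'' : (t:ℂ)^2 = (μ:ℂ)^2 + 41/3*(μ:ℂ) + 304/3 - ((μ:ℂ) + 41/3)^2/4 := by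
      have h := congrArg (fun r : ℝ => (r:ℂ)) ht2
      rw [ha, hc] at h
      push_cast at h
      linear_combination h
    simp only [eval_mul, eval_sub, eval_add, eval_X, eval_C, eval_pow]
    rw [ha]
    push_cast
    linear_combination hμ0' - (x - (μ:ℂ)) * ht2'' + (x - (μ:ℂ)) * (t:ℂ)^2 * Complex.I_sq
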